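/- Let k ∈ ℤ, 0 < R ≤ ∞, and w₀, w₁, w₂ ∈ C¹((0,R)). Define Q : B_R∖{0} → S₀ by Q(x) = w₀(r)E₀ + w₁(r)E₁(φ) + w₂(r)E₂(φ) for x = (r cos φ, r sin φ). Then Q is differentiable on B_R∖{0} and its gradient satisfies, for every such x, |∇Q(x)|² = w₀'(r)² + w₁'(r)² + w₂'(r)² + (k²/r²)(w₁(r)² + w₂(r)²), where |∇Q|² denotes the sum over all matrix entries Q_{ij} of |∇Q_{ij}|². -/

import Mathlib

open Real Matrix
open scoped ENNReal

noncomputable section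

abbrev Mat3 := Matrix (Fin 3) (Fin 3) ℝ

/-- `Q` is a symmetric traceless 3×3 real matrix, i.e. an element of `S₀`. -/
def isS0 (Q : Mat3) : Prop := Qᵀ = Q ∧ Q.trace = 0

def e1 : Fin 3 → ℝ := ![1, 0, 0]
def e2 : Fin 3 → ℝ := ![0, 1, 0]
def e3 : Fin 3 → ℝ := ![0, 0, 1]

/-- `n(φ) = (cos(kφ/2), sin(kφ/2), 0)`. -/
def nvec (k : ℤ) (φ : ℝ) : Fin 3 → ℝ := ![Real.cos ((k : ℝ) * φ / 2), Real.sin ((k : ℝ) * φ / 2), 0]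

/-- `m(φ) = (−sin(kφ/2), cos(kφ/2), 0)`. -/
def mvec (k : ℤ) (φ : ℝ) : Fin 3 → ℝ := ![-Real.sin ((k : ℝ) * φ / 2), Real.cos ((k : ℝ) * φ / 2), 0]

/-- `I₂ = I₃ − e₃ ⊗ e₃`. -/
def I2 : Mat3 := 1 - vecMulVec e3 e3

def E0 : Mat3 := Real.sqrt (3/2) • (vecMulVec e3 e3 - (1/3 : ℝ) • (1 : Mat3))
def E1 (k : ℤ) (φ : ℝ) : Mat3 :=
  Real.sqrt 2 • (vecMulVec (nvec k φ) (nvec k φ) - (1/2 : ℝ) • I2)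
def E2mat (k : ℤ) (φ : ℝ) : Mat3 :=
  (Real.sqrt 2)⁻¹ • (vecMulVec (nvec k φ) (mvec k φ) + vecMulVec (mvec k φ) (nvec k φ))
def E3mat : Mat3 := (Real.sqrt 2)⁻¹ • (vecMulVec e1 e3 + vecMulVec e3 e1)
def E4mat : Mat3 := (Real.sqrt 2)⁻¹ • (vecMulVec e2 e3 + vecMulVec e3 e2)

/-- The rotation `R_k(ψ)` of winding `k/2` about the vertical axis. -/
def Rk (k : ℤ) (ψ : ℝ) : Mat3 :=
  !![Real.cos ((k : ℝ) * ψ / 2), -Real.sin ((k : ℝ) * ψ / 2), 0;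
     Real.sin ((k : ℝ) * ψ / 2),  Real.cos ((k : ℝ) * ψ / 2), 0;
     0, 0, 1]

/-- The Landau-de Gennes bulk potential. -/
def fbulk (a2 b2 c2 : ℝ) (Q : Mat3) : ℝ :=
  -(a2/2) * (Q*Q).trace - (b2/3) * (Q*Q*Q).trace + (c2/4) * ((Q*Q).trace)^2

/-- The constant `s₊ = (b² + √(b⁴ + 24a²c²))/(4c²)`. -/
def splus (a2 b2 c2 : ℝ) : ℝ := (b2 + Real.sqrt (b2^2 + 24*a2*c2)) / (4*c2)

/-- Laplacian of a scalar function on `ℝ²`, as the sum of the two repeated partial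
derivatives along the coordinate axes. -/
def lap (f : ℝ × ℝ → ℝ) (p : ℝ × ℝ) : ℝ :=
  deriv (fun t => deriv (fun s => f (s, p.2)) t) p.1 +
  deriv (fun t => deriv (fun s => f (p.1, s)) t) p.2

/-- Componentwise Laplacian of a matrix-valued map on `ℝ²`. -/
def matLap (Q : ℝ × ℝ → Mat3) (p : ℝ × ℝ) : Mat3 :=
  Matrix.of fun i j => lap (fun x => Q x i j) p

/-- Squared norm of the gradient of a scalar function on `ℝ²`. -/
def gradNormSq (f : ℝ × ℝ → ℝ) (p : ℝ × ℝ) : ℝ :=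
  (fderiv ℝ f p (1, 0))^2 + (fderiv ℝ f p (0, 1))^2

/-- `|∇Q|²`: sum over all matrix entries of the squared norms of their gradients. -/
def matGradNormSq (Q : ℝ × ℝ → Mat3) (p : ℝ × ℝ) : ℝ :=
  ∑ i, ∑ j, gradNormSq (fun x => Q x i j) p

/-- Membership in the open disk of radius `R ∈ (0,∞]` centered at the origin. -/
def inBall (R : ℝ≥0∞) (x : ℝ × ℝ) : Prop :=
  ENNReal.ofReal (Real.sqrt (x.1^2 + x.2^2)) < R

/-- The right-hand side of the Euler–Lagrange equation
`ΔQ = −a²Q − b²(Q² − (1/3)|Q|²I₃) + c²|Q|²Q`. -/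
def ELrhs (a2 b2 c2 : ℝ) (A : Mat3) : Mat3 :=
  -a2 • A - b2 • (A * A - ((1/3 : ℝ) * (A * A).trace) • (1 : Mat3)) + (c2 * (A * A).trace) • A

/-- Frobenius squared norm of a 3×3 matrix. -/
def frobSq (A : Mat3) : ℝ := ∑ i, ∑ j, (A i j)^2

/-- For `x = (x₁,x₂) ∈ ℝ²`, `x̃ = (x₁,x₂,0) ∈ ℝ³`. -/
def tilde (x : ℝ × ℝ) : Fin 3 → ℝ := ![x.1, x.2, 0]

/-- The projection `P₂(x₁,x₂,x₃) = (x₁,x₂)`. -/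
def P2 (v : Fin 3 → ℝ) : ℝ × ℝ := (v 0, v 1)

/-- The antisymmetric matrix `S₀ = e₂⊗e₁ − e₁⊗e₂`. -/
def S0mat : Mat3 := vecMulVec e2 e1 - vecMulVec e1 e2

end
noncomputable section AuxStmt10

def Amat : Mat3 := (Real.sqrt 2)⁻¹ • !![(1:ℝ),0,0;0,-1,0;0,0,0]
def Bmat : Mat3 := (Real.sqrt 2)⁻¹ • !![(0:ℝ),1,0;1,0,0;0,0,0]

lemma E1_decomp (k : ℤ) (φ : ℝ) :
    E1 k φ = Real.cos ((k:ℝ)*φ) • Amat + Real.sin ((k:ℝ)*φ) • Bmat := by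
  have h2 : Real.sqrt 2 * Real.sqrt 2 = 2 := Real.mul_self_sqrt (by norm_num)
  have h0 : Real.sqrt 2 ≠ 0 := by positivity
  have hc := Real.cos_two_mul ((k:ℝ)*φ/2)
  have hs := Real.sin_two_mul ((k:ℝ)*φ/2)
  rw [show 2*((k:ℝ)*φ/2) = (k:ℝ)*φ by ring] at hc hs
  set c := Real.cos ((k:ℝ)*φ/2); set s := Real.sin ((k:ℝ)*φ/2)
  ext i j
  fin_cases i <;> fin_cases j <;>
    simp [E1, Amat, Bmat, I2, nvec, vecMulVec_apply, Matrix.smul_apply, Matrix.add_apply,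
      Matrix.sub_apply, Matrix.one_apply, e3, hc, hs, Matrix.vecHead, Matrix.vecTail] <;>
    field_simp <;>
    first
    | linear_combination (c^2 - 1/2) * h2
    | linear_combination (c*s) * h2
    | linear_combination (s*c) * h2
    | linear_combination (s^2 - 1/2) * h2
    | linear_combination (1/2 - s^2) * h2
    | linear_combination (1/2 - c^2) * h2
    | nlinarith [h2, Real.sin_sq_add_cos_sq ((k:ℝ)*φ/2)]

lemma E2_decomp (k : ℤ) (φ : ℝ) :
    E2mat k φ = (-Real.sin ((k:ℝ)*φ)) • Amat + Real.cos ((k:ℝ)*φ) • Bmat := by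
  have h2 : Real.sqrt 2 * Real.sqrt 2 = 2 := Real.mul_self_sqrt (by norm_num)
  have h0 : Real.sqrt 2 ≠ 0 := by positivity
  have hc := Real.cos_two_mul ((k:ℝ)*φ/2)
  have hs := Real.sin_two_mul ((k:ℝ)*φ/2)
  rw [show 2*((k:ℝ)*φ/2) = (k:ℝ)*φ by ring] at hc hs
  set c := Real.cos ((k:ℝ)*φ/2); set s := Real.sin ((k:ℝ)*φ/2)
  have hpy : s^2 + c^2 = 1 := Real.sin_sq_add_cos_sq ((k:ℝ)*φ/2)
  ext i j
  fin_cases i <;> fin_cases j <;>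
    simp [E2mat, Amat, Bmat, nvec, mvec, vecMulVec_apply, Matrix.smul_apply, Matrix.add_apply,
      Matrix.sub_apply, e3, hc, hs, Matrix.vecHead, Matrix.vecTail] <;>
    field_simp <;>
    first
    | linear_combination (c*s) * h2
    | linear_combination (-(c*s)) * h2
    | linear_combination (c^2 - 1/2) * h2 + h2 * hpy - 2*hpy
    | linear_combination (c^2 - s^2) * h2
    | nlinarith [h2, hpy]

def gfun (k : ℤ) : ℝ × ℝ → ℂ :=
  fun x => ((x.1:ℂ) + (x.2:ℂ)*Complex.I)^k * ((Real.sqrt (x.1^2+x.2^2) ^ (-k : ℤ) : ℝ) : ℂ)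

lemma polar_sqrt (r φ : ℝ) (hr : 0 ≤ r) : Real.sqrt ((r*Real.cos φ)^2 + (r*Real.sin φ)^2) = r := by
  rw [show (r*Real.cos φ)^2 + (r*Real.sin φ)^2 = r^2 by
    have := Real.sin_sq_add_cos_sq φ; nlinarith, Real.sqrt_sq hr]

lemma exp_eval (t : ℝ) :
    Complex.exp ((t:ℂ)*Complex.I) = ((Real.cos t : ℝ):ℂ) + ((Real.sin t : ℝ):ℂ)*Complex.I := by
  rw [Complex.exp_mul_I, Complex.ofReal_cos, Complex.ofReal_sin]

lemma gfun_polar (k : ℤ) (r φ : ℝ) (hr : 0 < r) :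
    gfun k (r*Real.cos φ, r*Real.sin φ)
      = ((Real.cos ((k:ℝ)*φ) : ℝ) : ℂ) + ((Real.sin ((k:ℝ)*φ) : ℝ) : ℂ) * Complex.I := by
  have hrC : (r:ℂ) ≠ 0 := by exact_mod_cast hr.ne'
  have hz : ((r*Real.cos φ : ℝ):ℂ) + ((r*Real.sin φ:ℝ):ℂ)*Complex.I
      = (r:ℂ) * Complex.exp ((φ:ℂ)*Complex.I) := by
    rw [exp_eval]; push_cast; ring
  have hek : Complex.exp ((φ:ℂ)*Complex.I) ^ k = Complex.exp ((((k:ℝ)*φ : ℝ):ℂ)*Complex.I) := by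
    rw [← Complex.exp_int_mul]; push_cast; ring_nf
  unfold gfun
  simp only [polar_sqrt r φ hr.le]
  rw [hz, mul_zpow, hek, exp_eval, Complex.ofReal_zpow, _root_.zpow_neg]
  field_simp [zpow_ne_zero k hrC]

lemma rho_deriv (r φ : ℝ) (hr : 0 < r) :
    ∃ L : (ℝ×ℝ) →L[ℝ] ℝ, HasFDerivAt (fun x : ℝ×ℝ => Real.sqrt (x.1^2+x.2^2)) L
        (r*Real.cos φ, r*Real.sin φ) ∧
      L (1,0) = Real.cos φ ∧ L (0,1) = Real.sin φ := by
  set p : ℝ×ℝ := (r*Real.cos φ, r*Real.sin φ) with hp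
  have hsq : (r*Real.cos φ)^2 + (r*Real.sin φ)^2 = r^2 := by
    have := Real.sin_sq_add_cos_sq φ; nlinarith
  have h2 : HasFDerivAt (fun x : ℝ×ℝ => x.1^2+x.2^2)
      ((p.1 • ContinuousLinearMap.fst ℝ ℝ ℝ + p.1 • ContinuousLinearMap.fst ℝ ℝ ℝ) +
       (p.2 • ContinuousLinearMap.snd ℝ ℝ ℝ + p.2 • ContinuousLinearMap.snd ℝ ℝ ℝ)) p := by
    have := ((hasFDerivAt_fst (𝕜 := ℝ) (p := p)).mul (hasFDerivAt_fst (p := p))).add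
      ((hasFDerivAt_snd (p := p)).mul (hasFDerivAt_snd (p := p)))
    refine HasFDerivAt.congr_of_eventuallyEq this (Filter.Eventually.of_forall fun x => ?_)
    simp only [Pi.add_apply, Pi.mul_apply]; ring
  have hsqrt : HasDerivAt Real.sqrt (1/(2*r)) ((fun x : ℝ×ℝ => x.1^2+x.2^2) p) := by
    have h := Real.hasDerivAt_sqrt (x := r^2) (by positivity)
    rw [Real.sqrt_sq hr.le] at h
    simpa [hp, hsq] using h
  have hcomp := hsqrt.comp_hasFDerivAt p h2
  refine ⟨_, hcomp, ?_, ?_⟩ <;> simp [hp] <;> field_simp <;> ring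

lemma gfun_deriv (k : ℤ) (r φ : ℝ) (hr : 0 < r) :
    ∃ L : (ℝ×ℝ) →L[ℝ] ℂ, HasFDerivAt (gfun k) L (r*Real.cos φ, r*Real.sin φ) ∧
      L (1,0) = (((k:ℝ)/r * Real.sin φ * Real.sin ((k:ℝ)*φ) : ℝ) : ℂ)
        + ((-((k:ℝ)/r * Real.sin φ * Real.cos ((k:ℝ)*φ)) : ℝ) : ℂ)*Complex.I ∧
      L (0,1) = ((-((k:ℝ)/r * Real.cos φ * Real.sin ((k:ℝ)*φ)) : ℝ) : ℂ)
        + (((k:ℝ)/r * Real.cos φ * Real.cos ((k:ℝ)*φ) : ℝ) : ℂ)*Complex.I := by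
  set p : ℝ×ℝ := (r*Real.cos φ, r*Real.sin φ) with hp
  obtain ⟨Lρ, hLρ, hv1, hv2⟩ := rho_deriv r φ hr
  have hsq : Real.sqrt (p.1^2 + p.2^2) = r := by
    have h1 : (r*Real.cos φ)^2 + (r*Real.sin φ)^2 = r^2 := by
      have := Real.sin_sq_add_cos_sq φ; nlinarith
    simp [hp, h1, Real.sqrt_sq hr.le]
  have hρk : HasFDerivAt (fun x : ℝ×ℝ => Real.sqrt (x.1^2+x.2^2) ^ (-k : ℤ))
      ((((-k : ℤ) : ℝ) * r ^ (-k-1 : ℤ)) • Lρ) p := by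
    have hd := hasDerivAt_zpow (-k) r (Or.inl hr.ne')
    exact hd.comp_hasFDerivAt_of_eq p hLρ hsq.symm
  have hzmap : HasFDerivAt (fun x : ℝ×ℝ => (x.1:ℂ) + (x.2:ℂ)*Complex.I)
      ((Complex.ofRealCLM.comp (ContinuousLinearMap.fst ℝ ℝ ℝ)) +
        (Complex.I • (Complex.ofRealCLM.comp (ContinuousLinearMap.snd ℝ ℝ ℝ)))) p := by
    have h1 : HasFDerivAt (fun x : ℝ×ℝ => ((x.1:ℝ):ℂ))
        (Complex.ofRealCLM.comp (ContinuousLinearMap.fst ℝ ℝ ℝ)) p :=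
      (Complex.ofRealCLM.hasFDerivAt).comp p (hasFDerivAt_fst)
    have h2 : HasFDerivAt (fun x : ℝ×ℝ => ((x.2:ℝ):ℂ))
        (Complex.ofRealCLM.comp (ContinuousLinearMap.snd ℝ ℝ ℝ)) p :=
      (Complex.ofRealCLM.hasFDerivAt).comp p (hasFDerivAt_snd)
    exact h1.add (h2.mul_const Complex.I)
  set z0 : ℂ := (p.1:ℂ) + (p.2:ℂ)*Complex.I with hz0def
  have hE : Complex.exp ((φ:ℂ)*Complex.I)
      = ((Real.cos φ : ℝ):ℂ) + ((Real.sin φ:ℝ):ℂ)*Complex.I := by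
    rw [Complex.exp_mul_I, Complex.ofReal_cos, Complex.ofReal_sin]
  have hz0 : z0 = (r:ℂ) * Complex.exp ((φ:ℂ)*Complex.I) := by
    rw [hE, hz0def, hp]; push_cast; ring
  have hrC : (r:ℂ) ≠ 0 := by exact_mod_cast hr.ne'
  have hz0ne : z0 ≠ 0 := by
    rw [hz0]; exact mul_ne_zero hrC (Complex.exp_ne_zero _)
  have hzk : HasFDerivAt (fun x : ℝ×ℝ => ((x.1:ℂ) + (x.2:ℂ)*Complex.I)^k)
      (((k:ℂ) * z0^(k-1)) • ((Complex.ofRealCLM.comp (ContinuousLinearMap.fst ℝ ℝ ℝ)) +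
        (Complex.I • (Complex.ofRealCLM.comp (ContinuousLinearMap.snd ℝ ℝ ℝ))))) p := by
    have hd := hasDerivAt_zpow k z0 (Or.inl hz0ne)
    exact hd.comp_hasFDerivAt p hzmap
  have hcast : HasFDerivAt (fun x : ℝ×ℝ => ((Real.sqrt (x.1^2+x.2^2) ^ (-k : ℤ) : ℝ) : ℂ))
      (Complex.ofRealCLM.comp ((((-k : ℤ) : ℝ) * r ^ (-k-1 : ℤ)) • Lρ)) p :=
    (Complex.ofRealCLM.hasFDerivAt).comp p hρk
  have hg := hzk.mul hcast
  have hEk : Complex.exp ((φ:ℂ)*Complex.I) ^ k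
      = ((Real.cos ((k:ℝ)*φ):ℝ):ℂ) + ((Real.sin ((k:ℝ)*φ):ℝ):ℂ)*Complex.I := by
    rw [← Complex.exp_int_mul,
      show ((k:ℂ) * ((φ:ℂ)*Complex.I)) = ((((k:ℝ)*φ : ℝ)):ℂ)*Complex.I by push_cast; ring,
      Complex.exp_mul_I, Complex.ofReal_cos, Complex.ofReal_sin]
  have hpy : ((Real.cos φ:ℝ):ℂ)^2 + ((Real.sin φ:ℝ):ℂ)^2 = 1 := by
    have := Real.cos_sq_add_sin_sq φ
    exact_mod_cast congrArg (fun t : ℝ => (t:ℂ)) this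
  have hinv : ((r:ℂ) * (((Real.cos φ:ℝ):ℂ) + ((Real.sin φ:ℝ):ℂ)*Complex.I))⁻¹
      = (r:ℂ)⁻¹ * (((Real.cos φ:ℝ):ℂ) - ((Real.sin φ:ℝ):ℂ)*Complex.I) := by
    rw [mul_inv]
    congr 1
    refine inv_eq_of_mul_eq_one_right ?_
    linear_combination hpy - ((Real.sin φ:ℝ):ℂ)^2 * Complex.I_sq
  have hzz : ((↑(r*Real.cos φ) : ℂ) + (↑(r*Real.sin φ):ℂ)*Complex.I) = z0 := by
    rw [hz0def, hp]
  have hsq2 : Real.sqrt ((r*Real.cos φ)^2 + (r*Real.sin φ)^2) = r := by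
    rw [show (r*Real.cos φ)^2 + (r*Real.sin φ)^2 = r^2 by
      have := Real.sin_sq_add_cos_sq φ; nlinarith, Real.sqrt_sq hr.le]
  have hrkm : (r:ℂ)^(-k-1 : ℤ) = ((r:ℂ)^k)⁻¹ * (r:ℂ)⁻¹ := by
    rw [show (-k-1:ℤ) = -(k+1) by ring, _root_.zpow_neg, zpow_add_one₀ hrC, mul_inv]
  have hane : ((r:ℂ)^k) ≠ 0 := zpow_ne_zero _ hrC
  refine ⟨_, hg, ?_, ?_⟩ <;>
  · simp only [ContinuousLinearMap.add_apply, ContinuousLinearMap.coe_smul',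
      ContinuousLinearMap.smul_apply, ContinuousLinearMap.coe_comp',
      Function.comp_apply, ContinuousLinearMap.coe_fst', ContinuousLinearMap.coe_snd',
      Complex.ofRealCLM_apply, smul_eq_mul, Pi.smul_apply, hv1, hv2]
    rw [hzz, zpow_sub_one₀ hz0ne, hz0, mul_zpow, hEk, hE, hinv, hsq2]
    push_cast [Complex.ofReal_zpow, hrkm, _root_.zpow_neg]
    have hI3 : Complex.I^3 = -Complex.I := by
      rw [pow_succ, Complex.I_sq]; ring
    field_simp
    ring_nf
    simp only [Complex.I_sq, hI3]
    ring

end AuxStmt10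

theorem stmt10 (k : ℤ) (R : ℝ≥0∞) (hR : 0 < R) (w₀ w₁ w₂ : ℝ → ℝ)
    (hw₀ : ContDiffOn ℝ 1 w₀ {r : ℝ | 0 < r ∧ ENNReal.ofReal r < R})
    (hw₁ : ContDiffOn ℝ 1 w₁ {r : ℝ | 0 < r ∧ ENNReal.ofReal r < R})
    (hw₂ : ContDiffOn ℝ 1 w₂ {r : ℝ | 0 < r ∧ ENNReal.ofReal r < R})
    (Q : ℝ × ℝ → Mat3)
    (hQ : ∀ r φ : ℝ, 0 < r → ENNReal.ofReal r < R →
      Q (r * Real.cos φ, r * Real.sin φ) = w₀ r • E0 + w₁ r • E1 k φ + w₂ r • E2mat k φ) :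
    ∀ r φ : ℝ, 0 < r → ENNReal.ofReal r < R →
      (∀ i j, DifferentiableAt ℝ (fun x => Q x i j) (r * Real.cos φ, r * Real.sin φ)) ∧
      matGradNormSq Q (r * Real.cos φ, r * Real.sin φ) =
        (deriv w₀ r)^2 + (deriv w₁ r)^2 + (deriv w₂ r)^2
          + (k : ℝ)^2 / r^2 * ((w₁ r)^2 + (w₂ r)^2) := by
  have hsOpen : IsOpen {t : ℝ | 0 < t ∧ ENNReal.ofReal t < R} := by
    have h1 : IsOpen {t : ℝ | 0 < t} := isOpen_lt continuous_const continuous_id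
    have h2 : IsOpen {t : ℝ | ENNReal.ofReal t < R} :=
      isOpen_lt ENNReal.continuous_ofReal continuous_const
    exact h1.inter h2
  intro r φ hr hRr
  have hmem : r ∈ {t : ℝ | 0 < t ∧ ENNReal.ofReal t < R} := ⟨hr, hRr⟩
  have hw₀d : HasDerivAt w₀ (deriv w₀ r) r :=
    ((hw₀.differentiableOn one_ne_zero).differentiableAt (hsOpen.mem_nhds hmem)).hasDerivAt
  have hw₁d : HasDerivAt w₁ (deriv w₁ r) r :=
    ((hw₁.differentiableOn one_ne_zero).differentiableAt (hsOpen.mem_nhds hmem)).hasDerivAt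
  have hw₂d : HasDerivAt w₂ (deriv w₂ r) r :=
    ((hw₂.differentiableOn one_ne_zero).differentiableAt (hsOpen.mem_nhds hmem)).hasDerivAt
  set p : ℝ×ℝ := (r * Real.cos φ, r * Real.sin φ) with hp
  set ρ : ℝ×ℝ → ℝ := fun x => Real.sqrt (x.1^2+x.2^2) with hρ
  set u : ℝ×ℝ → ℝ := fun x => w₁ (ρ x) * (gfun k x).re - w₂ (ρ x) * (gfun k x).im with hu
  set v : ℝ×ℝ → ℝ := fun x => w₁ (ρ x) * (gfun k x).im + w₂ (ρ x) * (gfun k x).re with hv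
  set F : ℝ×ℝ → Mat3 := fun x => w₀ (ρ x) • E0 + u x • Amat + v x • Bmat with hF
  -- the open set where Q = F
  have hUopen : IsOpen {x : ℝ×ℝ | x ≠ 0 ∧ ENNReal.ofReal (ρ x) < R} := by
    have h1 : IsOpen {x : ℝ×ℝ | x ≠ 0} := isOpen_compl_singleton
    have h2 : IsOpen {x : ℝ×ℝ | ENNReal.ofReal (ρ x) < R} := by
      refine isOpen_lt ?_ continuous_const
      exact ENNReal.continuous_ofReal.comp
        (((continuous_fst.pow 2).add (continuous_snd.pow 2)).sqrt)
    exact h1.inter h2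
  have hρp : ρ p = r := by
    simp only [hρ, hp]
    exact polar_sqrt r φ hr.le
  have hpU : p ∈ {x : ℝ×ℝ | x ≠ 0 ∧ ENNReal.ofReal (ρ x) < R} := by
    constructor
    · intro h0
      have h1 : r * Real.cos φ = 0 := congrArg Prod.fst h0
      have h2 : r * Real.sin φ = 0 := congrArg Prod.snd h0
      have e2 : (r*Real.cos φ)^2 + (r*Real.sin φ)^2 = r^2 := by
        have := Real.sin_sq_add_cos_sq φ; nlinarith
      rw [h1, h2] at e2
      nlinarith [mul_pos hr hr]
    · show ENNReal.ofReal (ρ p) < R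
      rw [hρp]; exact hRr
  have hQF : ∀ x ∈ {x : ℝ×ℝ | x ≠ 0 ∧ ENNReal.ofReal (ρ x) < R}, Q x = F x := by
    rintro x ⟨hx0, hxR⟩
    obtain ⟨r', φ', hr', hxR', hxp⟩ : ∃ r' φ' : ℝ, 0 < r' ∧ ENNReal.ofReal r' < R ∧
        x = (r' * Real.cos φ', r' * Real.sin φ') := by
      have hzne : ((x.1:ℂ) + (x.2:ℂ)*Complex.I) ≠ 0 := by
        intro h
        apply hx0
        have hre := congrArg Complex.re h
        have him := congrArg Complex.im h
        simp at hre him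
        exact Prod.ext hre him
      set z : ℂ := (x.1:ℂ) + (x.2:ℂ)*Complex.I with hz
      have hr' : 0 < ‖z‖ := norm_pos_iff.mpr hzne
      have habs : ‖z‖ = Real.sqrt (x.1^2+x.2^2) := by
        rw [hz, Complex.norm_def, Complex.normSq_apply]
        simp [pow_two]
      have hcs := Complex.norm_mul_cos_add_sin_mul_I z
      have hx1 : x.1 = ‖z‖ * Real.cos (Complex.arg z) := by
        have := congrArg Complex.re hcs
        simpa [hz] using this.symm
      have hx2 : x.2 = ‖z‖ * Real.sin (Complex.arg z) := by
        have := congrArg Complex.im hcs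
        simpa [hz] using this.symm
      exact ⟨‖z‖, Complex.arg z, hr', by rw [habs]; exact hxR, Prod.ext hx1 hx2⟩
    rw [hxp, hQ r' φ' hr' hxR']
    have hρx : ρ (r' * Real.cos φ', r' * Real.sin φ') = r' := by
      simp only [hρ]
      exact polar_sqrt _ _ hr'.le
    have hgx := gfun_polar k r' φ' hr'
    rw [hF, E1_decomp, E2_decomp]
    simp only [hu, hv, hρx, hgx, Complex.add_re, Complex.add_im, Complex.ofReal_re,
      Complex.ofReal_im, Complex.mul_re, Complex.mul_im, Complex.I_re, Complex.I_im]
    ext i j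
    simp only [Matrix.add_apply, Matrix.smul_apply, smul_eq_mul, Matrix.neg_apply]
    ring
  have hev : ∀ᶠ x in nhds p, Q x = F x :=
    Filter.eventually_of_mem (hUopen.mem_nhds hpU) hQF
  have hevE : ∀ i j : Fin 3, (fun x => Q x i j) =ᶠ[nhds p] (fun x => F x i j) :=
    fun i j => hev.mono (fun x hx => by simp only [hx])
  -- derivative data
  obtain ⟨Lρ, hLρ, hρ1, hρ2v⟩ := rho_deriv r φ hr
  obtain ⟨Lg, hLg, hLg1, hLg2⟩ := gfun_deriv k r φ hr
  have hgp : gfun k p = ((Real.cos ((k:ℝ)*φ) : ℝ) : ℂ) + ((Real.sin ((k:ℝ)*φ) : ℝ) : ℂ) * Complex.I := by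
    rw [hp]; exact gfun_polar k r φ hr
  have hgpre : (gfun k p).re = Real.cos ((k:ℝ)*φ) := by
    rw [hgp]; simp only [Complex.add_re, Complex.add_im, Complex.ofReal_re, Complex.ofReal_im, Complex.mul_re, Complex.mul_im, Complex.I_re, Complex.I_im]; ring
  have hgpim : (gfun k p).im = Real.sin ((k:ℝ)*φ) := by
    rw [hgp]; simp only [Complex.add_re, Complex.add_im, Complex.ofReal_re, Complex.ofReal_im, Complex.mul_re, Complex.mul_im, Complex.I_re, Complex.I_im]; ring
  have hLg1re : (Lg (1,0)).re = (k:ℝ)/r * Real.sin φ * Real.sin ((k:ℝ)*φ) := by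
    rw [hLg1]; simp only [Complex.add_re, Complex.add_im, Complex.ofReal_re, Complex.ofReal_im, Complex.mul_re, Complex.mul_im, Complex.I_re, Complex.I_im]; ring
  have hLg1im : (Lg (1,0)).im = -((k:ℝ)/r * Real.sin φ * Real.cos ((k:ℝ)*φ)) := by
    rw [hLg1]; simp only [Complex.add_re, Complex.add_im, Complex.ofReal_re, Complex.ofReal_im, Complex.mul_re, Complex.mul_im, Complex.I_re, Complex.I_im]; ring
  have hLg2re : (Lg (0,1)).re = -((k:ℝ)/r * Real.cos φ * Real.sin ((k:ℝ)*φ)) := by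
    rw [hLg2]; simp only [Complex.add_re, Complex.add_im, Complex.ofReal_re, Complex.ofReal_im, Complex.mul_re, Complex.mul_im, Complex.I_re, Complex.I_im]; ring
  have hLg2im : (Lg (0,1)).im = (k:ℝ)/r * Real.cos φ * Real.cos ((k:ℝ)*φ) := by
    rw [hLg2]; simp only [Complex.add_re, Complex.add_im, Complex.ofReal_re, Complex.ofReal_im, Complex.mul_re, Complex.mul_im, Complex.I_re, Complex.I_im]; ring
  have hw1ρ : HasFDerivAt (fun x => w₁ (ρ x)) ((deriv w₁ r) • Lρ) p :=
    hw₁d.comp_hasFDerivAt_of_eq p hLρ hρp.symm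
  have hw2ρ : HasFDerivAt (fun x => w₂ (ρ x)) ((deriv w₂ r) • Lρ) p :=
    hw₂d.comp_hasFDerivAt_of_eq p hLρ hρp.symm
  have hCre : HasFDerivAt (fun x => (gfun k x).re) (Complex.reCLM.comp Lg) p :=
    (Complex.reCLM.hasFDerivAt).comp p hLg
  have hCim : HasFDerivAt (fun x => (gfun k x).im) (Complex.imCLM.comp Lg) p :=
    (Complex.imCLM.hasFDerivAt).comp p hLg
  obtain ⟨Da, hDaF, hDa1, hDa2⟩ : ∃ L : (ℝ×ℝ) →L[ℝ] ℝ,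
      HasFDerivAt (fun x => w₀ (ρ x)) L p ∧
      L (1,0) = deriv w₀ r * Real.cos φ ∧ L (0,1) = deriv w₀ r * Real.sin φ := by
    refine ⟨(deriv w₀ r) • Lρ, hw₀d.comp_hasFDerivAt_of_eq p hLρ hρp.symm, ?_, ?_⟩ <;>
      simp [hρ1, hρ2v]
  obtain ⟨Du, hDuF, hDu1, hDu2⟩ : ∃ L : (ℝ×ℝ) →L[ℝ] ℝ,
      HasFDerivAt u L p ∧
      L (1,0) = (deriv w₁ r * Real.cos ((k:ℝ)*φ) - deriv w₂ r * Real.sin ((k:ℝ)*φ)) * Real.cos φ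
        + (k:ℝ)/r * (w₁ r * Real.sin ((k:ℝ)*φ) + w₂ r * Real.cos ((k:ℝ)*φ)) * Real.sin φ ∧
      L (0,1) = (deriv w₁ r * Real.cos ((k:ℝ)*φ) - deriv w₂ r * Real.sin ((k:ℝ)*φ)) * Real.sin φ
        - (k:ℝ)/r * (w₁ r * Real.sin ((k:ℝ)*φ) + w₂ r * Real.cos ((k:ℝ)*φ)) * Real.cos φ := by
    refine ⟨_, (hw1ρ.mul hCre).sub (hw2ρ.mul hCim), ?_, ?_⟩ <;>
    · simp only [ContinuousLinearMap.sub_apply, ContinuousLinearMap.add_apply,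
        ContinuousLinearMap.smul_apply, ContinuousLinearMap.coe_comp', Function.comp_apply,
        Complex.reCLM_apply, Complex.imCLM_apply, smul_eq_mul, hρp, hgpre, hgpim,
        hρ1, hρ2v, hLg1re, hLg1im, hLg2re, hLg2im]
      ring
  obtain ⟨Dv, hDvF, hDv1, hDv2⟩ : ∃ L : (ℝ×ℝ) →L[ℝ] ℝ,
      HasFDerivAt v L p ∧
      L (1,0) = (deriv w₁ r * Real.sin ((k:ℝ)*φ) + deriv w₂ r * Real.cos ((k:ℝ)*φ)) * Real.cos φ
        - (k:ℝ)/r * (w₁ r * Real.cos ((k:ℝ)*φ) - w₂ r * Real.sin ((k:ℝ)*φ)) * Real.sin φ ∧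
      L (0,1) = (deriv w₁ r * Real.sin ((k:ℝ)*φ) + deriv w₂ r * Real.cos ((k:ℝ)*φ)) * Real.sin φ
        + (k:ℝ)/r * (w₁ r * Real.cos ((k:ℝ)*φ) - w₂ r * Real.sin ((k:ℝ)*φ)) * Real.cos φ := by
    refine ⟨_, (hw1ρ.mul hCim).add (hw2ρ.mul hCre), ?_, ?_⟩ <;>
    · simp only [ContinuousLinearMap.add_apply,
        ContinuousLinearMap.smul_apply, ContinuousLinearMap.coe_comp', Function.comp_apply,
        Complex.reCLM_apply, Complex.imCLM_apply, smul_eq_mul, hρp, hgpre, hgpim,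
        hρ1, hρ2v, hLg1re, hLg1im, hLg2re, hLg2im]
      ring
  have hFentry : ∀ i j : Fin 3,
      (fun x => F x i j) = fun x => w₀ (ρ x) * E0 i j + u x * Amat i j + v x * Bmat i j := by
    intro i j; funext x
    simp [hF, Matrix.add_apply, Matrix.smul_apply, smul_eq_mul]
  have hEntryD : ∀ i j : Fin 3, HasFDerivAt (fun x => F x i j)
      (E0 i j • Da + Amat i j • Du + Bmat i j • Dv) p := by
    intro i j
    have h := ((hDaF.mul_const (E0 i j)).add (hDuF.mul_const (Amat i j))).add
      (hDvF.mul_const (Bmat i j))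
    rw [hFentry i j]
    exact h
  have hdiff : ∀ i j : Fin 3, DifferentiableAt ℝ (fun x => Q x i j) p := by
    intro i j
    exact ((hevE i j).differentiableAt_iff).mpr (hEntryD i j).differentiableAt
  refine ⟨hdiff, ?_⟩
  have hfd : ∀ i j : Fin 3, fderiv ℝ (fun x => Q x i j) p
      = E0 i j • Da + Amat i j • Du + Bmat i j • Dv :=
    fun i j => ((hevE i j).fderiv_eq).trans (hEntryD i j).fderiv
  have key : matGradNormSq Q p = ∑ i : Fin 3, ∑ j : Fin 3,
      ((E0 i j * (Da (1,0)) + Amat i j * (Du (1,0)) + Bmat i j * (Dv (1,0)))^2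
      + (E0 i j * (Da (0,1)) + Amat i j * (Du (0,1)) + Bmat i j * (Dv (0,1)))^2) := by
    unfold matGradNormSq gradNormSq
    refine Finset.sum_congr rfl fun i _ => Finset.sum_congr rfl fun j _ => ?_
    rw [hfd i j]
    simp only [ContinuousLinearMap.add_apply, ContinuousLinearMap.smul_apply, smul_eq_mul]
  rw [key, hDa1, hDa2, hDu1, hDu2, hDv1, hDv2]
  simp only [Fin.sum_univ_three]
  norm_num [E0, Amat, Bmat, Matrix.vecMulVec_apply, e3, Matrix.one_apply, Matrix.smul_apply,
    Matrix.sub_apply, smul_eq_mul, Matrix.vecHead, Matrix.vecTail, Fin.ext_iff]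
  norm_num [Matrix.cons_val_two, Matrix.vecHead, Matrix.vecTail]
  have hφpy : Real.cos φ^2 + Real.sin φ^2 = 1 := Real.cos_sq_add_sin_sq φ
  have hkpy : Real.cos ((k:ℝ)*φ)^2 + Real.sin ((k:ℝ)*φ)^2 = 1 := Real.cos_sq_add_sin_sq _
  have hs1 : (Real.sqrt 3)^2 * ((Real.sqrt 2)⁻¹)^2 = (3:ℝ)/2 := by
    rw [inv_pow, Real.sq_sqrt, Real.sq_sqrt] <;> norm_num
  have hs2 : ((Real.sqrt 2)⁻¹)^2 = (1:ℝ)/2 := by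
    rw [inv_pow, Real.sq_sqrt] <;> norm_num
  set a' := deriv w₀ r
  set b' := deriv w₁ r
  set c' := deriv w₂ r
  set b := w₁ r
  set c := w₂ r
  set K := ((k:ℤ):ℝ)
  set cφ := Real.cos φ
  set sφ := Real.sin φ
  set ck := Real.cos ((k:ℝ)*φ)
  set sk := Real.sin ((k:ℝ)*φ)
  set da1 := a' * cφ
  set da2 := a' * sφ
  set du1 := (b' * ck - c' * sk) * cφ + K/r * (b * sk + c * ck) * sφ
  set du2 := (b' * ck - c' * sk) * sφ - K/r * (b * sk + c * ck) * cφ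
  set dv1 := (b' * sk + c' * ck) * cφ - K/r * (b * ck - c * sk) * sφ
  set dv2 := (b' * sk + c' * ck) * sφ + K/r * (b * ck - c * sk) * cφ
  linear_combination (2/3 : ℝ)*(da1^2+da2^2)*hs1 + 2*(du1^2+du2^2+dv1^2+dv2^2)*hs2
    + ((a')^2 + ((b')^2+(c')^2+(K/r)^2*(b^2+c^2))*(ck^2+sk^2)) * hφpy
    + ((b')^2+(c')^2+(K/r)^2*(b^2+c^2)) * hkpy
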